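/- Fix K, r ∈ [1,∞) and, for each i ∈ ℕ, let f_i : ℝ → ℝ be K-Lipschitz with |f_i(0)| ≤ K and let g_i : ℝ → ℝ be 1-Lipschitz with g_i(0) = 0. Define h_d : ℝ^d → ℝ recursively by h_1 = f_1 and h_d(x) = g_d(max{h_{d−1}(x_1,…,x_{d−1}), f_d(x_d)}) for d ≥ 2. Then for every d ∈ ℕ and ε ∈ (0,1] there exists a skeleton φ with ReLU-realization R_ReLU(φ) : ℝ^d → ℝ such that: 1) sup_{x∈[−r,r]^d} |h_d(x) − R_ReLU(φ)(x)| ≤ ε; 2) R_ReLU(φ) is K-Lipschitz on ℝ^d; 3) P(φ) ≤ (3/7)·10⁴·K³·r·d^{13/2}·ε^{−1}. -/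

import Mathlib

open scoped BigOperators ENNReal

noncomputable section

/-- The rectified linear unit activation function. -/
def ReLU (x : ℝ) : ℝ := max x 0

/-- Truncation of a real sequence to its first `n` entries. -/
def trunc (n : ℕ) (x : ℕ → ℝ) : ℕ → ℝ := fun j => if j < n then x j else 0

/-- Embedding of a Euclidean vector into the space of real sequences. -/
def emb (n : ℕ) (x : EuclideanSpace ℝ (Fin n)) : ℕ → ℝ :=
  fun j => if h : j < n then x ⟨j, h⟩ else 0

/-- A neural network skeleton of depth `Dm + 1`.  The layer dimensions are
`l 0, …, l (Dm + 1)`; the weight matrix of layer `k + 1` is `V k` (a matrix of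
size `l (k+1) × l k`, stored as a doubly indexed sequence) and its bias is `b k`.
Entries beyond the relevant ranges are irrelevant junk. -/
structure NN where
  Dm : ℕ
  l : ℕ → ℕ
  V : ℕ → ℕ → ℕ → ℝ
  b : ℕ → ℕ → ℝ

namespace NN

/-- Depth `D(φ)` of a skeleton. -/
def depth (φ : NN) : ℕ := φ.Dm + 1

/-- Number of parameters `P(φ) = ∑_{k=1}^{D} l_k (l_{k-1} + 1)`. -/
def P (φ : NN) : ℕ := ∑ k ∈ Finset.range φ.depth, φ.l (k + 1) * (φ.l k + 1)

/-- The affine map `A_{k+1}(x) = V_{k+1} x + b_{k+1}` of a skeleton. -/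
def aff (φ : NN) (k : ℕ) (x : ℕ → ℝ) : ℕ → ℝ :=
  fun i => (∑ j ∈ Finset.range (φ.l k), φ.V k i j * x j) + φ.b k i

/-- State after `k` layers, with the activation applied after each affine map. -/
def hidden (a : ℝ → ℝ) (φ : NN) : ℕ → (ℕ → ℝ) → ℕ → ℝ
  | 0 => fun x => x
  | k + 1 => fun x i => a (φ.aff k (φ.hidden a k x) i)

/-- The `a`-realization `R_a(φ) = A_D ∘ a ∘ A_{D-1} ∘ ⋯ ∘ a ∘ A_1`, acting on
sequences (only the first `l 0` input coordinates and the first `l D` output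
coordinates are meaningful). -/
def fullReal (a : ℝ → ℝ) (φ : NN) (x : ℕ → ℝ) : ℕ → ℝ :=
  φ.aff φ.Dm (φ.hidden a φ.Dm (trunc (φ.l 0) x))

/-- The `a`-realization as a map `ℝ^m → ℝ^n` (meaningful when `l 0 = m` and
`l D = n`). -/
def realAs (a : ℝ → ℝ) (φ : NN) (m n : ℕ) (x : EuclideanSpace ℝ (Fin m)) :
    EuclideanSpace ℝ (Fin n) :=
  WithLp.toLp 2 (fun i => φ.fullReal a (emb m x) i)

/-- The `a`-realization as a scalar-valued map `ℝ^m → ℝ`. -/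
def realScalar (a : ℝ → ℝ) (φ : NN) (m : ℕ) (x : EuclideanSpace ℝ (Fin m)) : ℝ :=
  φ.fullReal a (emb m x) 0

/-- The `a`-realization as a map `ℝ → ℝ`. -/
def real1 (a : ℝ → ℝ) (φ : NN) (x : ℝ) : ℝ :=
  φ.fullReal a (fun j => if j = 0 then x else 0) 0

/-- Concatenation `ψ ∘ φ` of two skeletons (meaningful when
`l_{D(φ)}(φ) = l_0(ψ)`). -/
def comp (ψ φ : NN) : NN where
  Dm := φ.Dm + ψ.Dm
  l := fun k => if k < φ.depth then φ.l k else ψ.l (k + 1 - φ.depth)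
  V := fun k =>
    if k < φ.Dm then φ.V k
    else if k = φ.Dm then fun i j => ∑ m ∈ Finset.range (ψ.l 0), ψ.V 0 i m * φ.V φ.Dm m j
    else ψ.V (k - φ.Dm)
  b := fun k =>
    if k < φ.Dm then φ.b k
    else if k = φ.Dm then
      fun i => (∑ m ∈ Finset.range (ψ.l 0), ψ.V 0 i m * φ.b φ.Dm m) + ψ.b 0 i
    else ψ.b (k - φ.Dm)

/-- Offset of the `q`-th block in layer `k` of a parallelization. -/
def poff (ν : ℕ → NN) (k q : ℕ) : ℕ := ∑ j ∈ Finset.range q, (ν j).l k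

/-- Parallelization `p(φ_1, …, φ_n)` of `n` skeletons (meaningful when they all
have the same depth): block-diagonal weight matrices and concatenated biases. -/
def parallel (n : ℕ) (ν : ℕ → NN) : NN where
  Dm := (ν 0).Dm
  l := fun k => ∑ j ∈ Finset.range n, (ν j).l k
  V := fun k i j =>
    ∑ q ∈ Finset.range n,
      if poff ν (k + 1) q ≤ i ∧ i < poff ν (k + 1) q + (ν q).l (k + 1) ∧
          poff ν k q ≤ j ∧ j < poff ν k q + (ν q).l k then
        (ν q).V k (i - poff ν (k + 1) q) (j - poff ν k q)
      else 0
  b := fun k i =>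
    ∑ q ∈ Finset.range n,
      if poff ν (k + 1) q ≤ i ∧ i < poff ν (k + 1) q + (ν q).l (k + 1) then
        (ν q).b k (i - poff ν (k + 1) q)
      else 0

/-- The activation `a` fulfills the `c`-identity requirement, witnessed by the
skeleton `I`: `I` has depth 2, input and output dimension 1, hidden dimension
at most `c`, and its `a`-realization is the identity on `ℝ`. -/
def IdReq (a : ℝ → ℝ) (c : ℝ) (I : NN) : Prop :=
  I.Dm = 1 ∧ I.l 0 = 1 ∧ I.l 2 = 1 ∧ (I.l 1 : ℝ) ≤ c ∧
    ∀ x : ℕ → ℝ, I.fullReal a x 0 = x 0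

/-- The `d`-fold parallelization `I_d` of an identity skeleton. -/
def Idn (I : NN) (d : ℕ) : NN := parallel d fun _ => I

/-- Concatenate `m` identity networks after `φ`. -/
def padAfter (I φ : NN) : ℕ → NN
  | 0 => φ
  | m + 1 => comp (Idn I ((padAfter I φ m).l (padAfter I φ m).depth)) (padAfter I φ m)

/-- Concatenate `m` identity networks in front of `φ`. -/
def padBefore (I φ : NN) : ℕ → NN
  | 0 => φ
  | m + 1 => comp (padBefore I φ m) (Idn I ((padBefore I φ m).l 0))

/-- Diagonal ("staggered") parallelization `p_I(φ_1, …, φ_n)` of arbitrary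
skeletons, obtained by padding each `φ_q` with identity networks so that all
have equal depth and then parallelizing. -/
def dpar (I : NN) (n : ℕ) (ν : ℕ → NN) : NN :=
  parallel n fun q =>
    padAfter I (padBefore I (ν q) (∑ j ∈ Finset.range q, (ν j).depth))
      (∑ j ∈ Finset.Ico (q + 1) n, (ν j).depth)

end NN

/-- The recursively defined functions `h_d` built from maxima of
one-dimensional Lipschitz functions: `h_1 = f_1` and
`h_d(x) = g_d(max{h_{d-1}(x_1, …, x_{d-1}), f_d(x_d)})`.  Here `hrec f g d`
corresponds to `h_{d+1}`. -/
def hrec (f g : ℕ → ℝ → ℝ) : (d : ℕ) → EuclideanSpace ℝ (Fin (d + 1)) → ℝ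
  | 0 => fun x => f 1 (x 0)
  | d + 1 => fun x =>
      g (d + 2) (max (hrec f g d (WithLp.toLp 2 fun i : Fin (d + 1) => x i.castSucc)) (f (d + 2) (x (Fin.last (d + 1)))))

lemma relu_sub_relu (x p q : ℝ) (hpq : p ≤ q) :
    ReLU (x - p) - ReLU (x - q) = min (max x p) q - p := by
  simp only [ReLU]
  rcases le_total x p with h | h
  · rw [max_eq_right (by linarith : x - p ≤ 0), max_eq_right (by linarith : x - q ≤ 0),
      max_eq_right h, min_eq_left hpq]
    ring
  · rcases le_total x q with h2 | h2
    · rw [max_eq_left (by linarith : (0:ℝ) ≤ x - p), max_eq_right (by linarith : x - q ≤ 0),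
        max_eq_left h, min_eq_left h2]
      ring
    · rw [max_eq_left (by linarith : (0:ℝ) ≤ x - p), max_eq_left (by linarith : (0:ℝ) ≤ x - q),
        max_eq_left h, min_eq_right h2]
      ring

lemma relu_sub_relu_neg (x : ℝ) : ReLU x - ReLU (-x) = x := by
  simp only [ReLU]
  rcases le_total x 0 with h | h
  · rw [max_eq_right h, max_eq_left (by linarith : (0:ℝ) ≤ -x)]; ring
  · rw [max_eq_left h, max_eq_right (by linarith : -x ≤ 0)]; ring

lemma add_relu_sub (a b : ℝ) : a + ReLU (b - a) = max a b := by
  simp only [ReLU]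
  rcases le_total a b with h | h
  · rw [max_eq_left (by linarith : (0:ℝ) ≤ b - a), max_eq_right h]; ring
  · rw [max_eq_right (by linarith : b - a ≤ 0), max_eq_left h]; ring

lemma relu_nonneg (x : ℝ) : 0 ≤ ReLU x := le_max_right _ _

namespace Interp

variable (f : ℝ → ℝ) (R : ℝ) (N : ℕ)

def knot (j : ℕ) : ℝ := -R + j * (2 * R / N)

def slope (j : ℕ) : ℝ :=
  if j < N then (f (knot R N (j + 1)) - f (knot R N j)) / (2 * R / N) else 0

def coeffA (j : ℕ) : ℝ :=
  slope f R N j - if j = 0 then 0 else slope f R N (j - 1)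

def interp (x : ℝ) : ℝ :=
  f (-R) + ∑ j ∈ Finset.range (N + 1), coeffA f R N j * ReLU (x - knot R N j)

variable {R N}

lemma mesh_pos (hR : 0 < R) (hN : 0 < N) : (0:ℝ) < 2 * R / N := by
  have h : (0:ℝ) < N := by exact_mod_cast hN
  positivity

lemma knot_succ (j : ℕ) : knot R N (j + 1) = knot R N j + 2 * R / N := by
  simp only [knot]; push_cast; ring

lemma knot_mono (hR : 0 < R) (hN : 0 < N) {i j : ℕ} (hij : i ≤ j) :
    knot R N i ≤ knot R N j := by
  have h1 : (i:ℝ) ≤ j := by exact_mod_cast hij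
  have h2 := mesh_pos hR hN
  simp only [knot]
  have := mul_le_mul_of_nonneg_right h1 h2.le
  linarith

lemma knot_zero : knot R N 0 = -R := by simp [knot]

lemma knot_last (hN : 0 < N) : knot R N N = R := by
  have h : (N:ℝ) ≠ 0 := by exact_mod_cast hN.ne'
  have e : (N:ℝ) * (2 * R / N) = 2 * R := by field_simp
  simp only [knot]; rw [e]; ring

lemma slope_last : slope f R N N = 0 := if_neg (lt_irrefl N)

/-- clamp of `x` into `[knot j, knot (j+1)]` -/
def cl (R : ℝ) (N : ℕ) (j : ℕ) (x : ℝ) : ℝ := min (max x (knot R N j)) (knot R N (j + 1))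

lemma interp_eq (hR : 0 < R) (hN : 0 < N) (x : ℝ) :
    interp f R N x = f (-R) + ∑ j ∈ Finset.range N, slope f R N j * (cl R N j x - knot R N j) := by
  unfold interp coeffA
  congr 1
  have h1 : ∀ j, (slope f R N j - if j = 0 then 0 else slope f R N (j - 1)) * ReLU (x - knot R N j)
      = slope f R N j * ReLU (x - knot R N j)
        - (if j = 0 then 0 else slope f R N (j - 1)) * ReLU (x - knot R N j) := by
    intro j; ring
  rw [Finset.sum_congr rfl (fun j _ => h1 j), Finset.sum_sub_distrib]
  have h2 : ∑ j ∈ Finset.range (N + 1), slope f R N j * ReLU (x - knot R N j)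
      = ∑ j ∈ Finset.range N, slope f R N j * ReLU (x - knot R N j) := by
    rw [Finset.sum_range_succ, slope_last]
    ring
  have h3 : ∑ j ∈ Finset.range (N + 1),
      (if j = 0 then 0 else slope f R N (j - 1)) * ReLU (x - knot R N j)
      = ∑ j ∈ Finset.range N, slope f R N j * ReLU (x - knot R N (j + 1)) := by
    rw [Finset.sum_range_succ']
    simp
  rw [h2, h3, ← Finset.sum_sub_distrib]
  refine Finset.sum_congr rfl (fun j _ => ?_)
  rw [← mul_sub, relu_sub_relu x _ _ (knot_mono hR hN (Nat.le_succ j))]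
  rfl

lemma slope_abs_le {L : ℝ} (hR : 0 < R) (hN : 0 < N) (hL0 : 0 ≤ L)
    (hf : ∀ x y, |f x - f y| ≤ L * |x - y|) (j : ℕ) :
    |slope f R N j| ≤ L := by
  unfold slope
  split
  · have hh := mesh_pos (R := R) (N := N) hR hN
    rw [abs_div, abs_of_pos hh, div_le_iff₀ hh]
    calc |f (knot R N (j+1)) - f (knot R N j)| ≤ L * |knot R N (j+1) - knot R N j| := hf _ _
      _ = L * (2 * R / N) := by rw [knot_succ]; rw [show knot R N j + 2*R/↑N - knot R N j = 2*R/↑N by ring, abs_of_pos hh]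
  · simpa using hL0

lemma cl_mono (j : ℕ) {x y : ℝ} (hxy : x ≤ y) : cl R N j x ≤ cl R N j y :=
  min_le_min (max_le_max hxy le_rfl) le_rfl

lemma cl_telescope (hR : 0 < R) (hN : 0 < N) {x : ℝ} : ∀ n : ℕ,
    ∑ j ∈ Finset.range n, (cl R N j x - knot R N j)
      = min (max x (knot R N 0)) (knot R N n) - knot R N 0 := by
  intro n
  induction n with
  | zero => simp [min_eq_right (le_max_right x (knot R N 0))]
  | succ m ih =>
      rw [Finset.sum_range_succ, ih]
      have h0m : knot R N 0 ≤ knot R N m := knot_mono hR hN (Nat.zero_le m)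
      have hmm : knot R N m ≤ knot R N (m + 1) := knot_mono hR hN (Nat.le_succ m)
      unfold cl
      rcases le_total x (knot R N m) with h | h
      · rw [max_eq_right h, min_eq_left hmm,
          min_eq_left (le_trans (max_le h h0m) hmm), min_eq_left (max_le h h0m)]
        ring
      · rw [max_eq_left h, max_eq_left (le_trans h0m h), min_eq_right h]
        rcases le_total x (knot R N (m+1)) with h2 | h2
        · rw [min_eq_left h2]; ring
        · rw [min_eq_right h2]; ring

lemma clamp_lip (a b x y : ℝ) (hab : a ≤ b) (hxy : x ≤ y) :
    min (max y a) b - min (max x a) b ≤ y - x := by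
  rcases le_total y a with h | h
  · rw [max_eq_right h, max_eq_right (le_trans hxy h)]; linarith
  · rcases le_total x a with h2 | h2
    · rw [max_eq_right h2, max_eq_left h, min_eq_left hab]
      rcases le_total y b with h3 | h3
      · rw [min_eq_left h3]; linarith
      · rw [min_eq_right h3]; linarith
    · rw [max_eq_left h, max_eq_left h2]
      rcases le_total y b with h3 | h3
      · rw [min_eq_left h3, min_eq_left (le_trans hxy h3)]
      · rw [min_eq_right h3]
        rcases le_total x b with h4 | h4
        · rw [min_eq_left h4]; linarith
        · rw [min_eq_right h4]; linarith

lemma interp_lipschitz {L : ℝ} (hR : 0 < R) (hN : 0 < N) (hL0 : 0 ≤ L)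
    (hf : ∀ x y, |f x - f y| ≤ L * |x - y|) (x y : ℝ) :
    |interp f R N x - interp f R N y| ≤ L * |x - y| := by
  have key : ∀ x y : ℝ, x ≤ y → |interp f R N x - interp f R N y| ≤ L * |x - y| := by
    clear x y
    intro x y hxy
    rw [interp_eq f hR hN, interp_eq f hR hN, add_sub_add_left_eq_sub,
      ← Finset.sum_sub_distrib,
      Finset.sum_congr rfl (fun j _ => by ring :
        ∀ j ∈ Finset.range N, slope f R N j * (cl R N j x - knot R N j)
          - slope f R N j * (cl R N j y - knot R N j)
          = slope f R N j * (cl R N j x - cl R N j y))]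
    have step : ∀ j ∈ Finset.range N, |slope f R N j * (cl R N j x - cl R N j y)|
        ≤ L * (cl R N j y - cl R N j x) := by
      intro j _
      rw [abs_mul, abs_sub_comm,
        abs_of_nonneg (by linarith [cl_mono (R := R) (N := N) j hxy] : (0:ℝ) ≤ cl R N j y - cl R N j x)]
      exact mul_le_mul_of_nonneg_right (slope_abs_le f hR hN hL0 hf j)
        (by linarith [cl_mono (R := R) (N := N) j hxy])
    calc |∑ j ∈ Finset.range N, slope f R N j * (cl R N j x - cl R N j y)|
        ≤ ∑ j ∈ Finset.range N, |slope f R N j * (cl R N j x - cl R N j y)| :=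
          Finset.abs_sum_le_sum_abs _ _
      _ ≤ ∑ j ∈ Finset.range N, L * (cl R N j y - cl R N j x) := Finset.sum_le_sum step
      _ = L * ∑ j ∈ Finset.range N, (cl R N j y - cl R N j x) := by rw [Finset.mul_sum]
      _ ≤ L * |x - y| := by
          have ht : ∑ j ∈ Finset.range N, (cl R N j y - cl R N j x)
              = (min (max y (knot R N 0)) (knot R N N))
                - (min (max x (knot R N 0)) (knot R N N)) := by
            have e : ∀ j, cl R N j y - cl R N j x
                = (cl R N j y - knot R N j) - (cl R N j x - knot R N j) := fun j => by ring
            rw [Finset.sum_congr rfl (fun j _ => e j), Finset.sum_sub_distrib,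
              cl_telescope hR hN, cl_telescope hR hN]
            ring
          rw [ht]
          have h2 := clamp_lip (knot R N 0) (knot R N N) x y (knot_mono hR hN (Nat.zero_le N)) hxy
          have hm : min (max x (knot R N 0)) (knot R N N) ≤ min (max y (knot R N 0)) (knot R N N) :=
            min_le_min (max_le_max hxy le_rfl) le_rfl
          rw [abs_sub_comm x y, abs_of_nonneg (by linarith : (0:ℝ) ≤ y - x)]
          nlinarith
  rcases le_total x y with h | h
  · exact key x y h
  · rw [abs_sub_comm, abs_sub_comm x y]; exact key y x h


lemma interp_knot (hR : 0 < R) (hN : 0 < N) {i : ℕ} (hi : i ≤ N) :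
    interp f R N (knot R N i) = f (knot R N i) := by
  rw [interp_eq f hR hN]
  have hmesh := mesh_pos (R := R) (N := N) hR hN
  have hsum : ∑ j ∈ Finset.range N, slope f R N j * (cl R N j (knot R N i) - knot R N j)
      = ∑ j ∈ Finset.range i, slope f R N j * (2 * R / N) := by
    rw [← Finset.sum_subset (Finset.range_subset_range.2 hi)]
    · refine Finset.sum_congr rfl (fun j hj => ?_)
      have hj' : j < i := Finset.mem_range.1 hj
      have h1 : knot R N (j + 1) ≤ knot R N i := knot_mono hR hN hj'
      have h2 : knot R N j ≤ knot R N i := knot_mono hR hN (le_of_lt hj')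
      unfold cl
      rw [max_eq_left h2, min_eq_right h1, knot_succ]
      ring
    · intro j _ hj
      have hj' : i ≤ j := le_of_not_gt (fun h => hj (Finset.mem_range.2 h))
      have h2 : knot R N i ≤ knot R N j := knot_mono hR hN hj'
      unfold cl
      rw [max_eq_right h2, min_eq_left (knot_mono hR hN (Nat.le_succ j))]
      ring
  rw [hsum]
  have hterm : ∀ j ∈ Finset.range i, slope f R N j * (2 * R / N)
      = f (knot R N (j + 1)) - f (knot R N j) := by
    intro j hj
    have hjN : j < N := lt_of_lt_of_le (Finset.mem_range.1 hj) hi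
    unfold slope
    rw [if_pos hjN, div_mul_cancel₀ _ (ne_of_gt hmesh)]
  rw [Finset.sum_congr rfl hterm, Finset.sum_range_sub (fun j => f (knot R N j))]
  rw [knot_zero]
  ring

lemma interp_error {L : ℝ} (hR : 0 < R) (hN : 0 < N) (hL0 : 0 ≤ L)
    (hf : ∀ x y, |f x - f y| ≤ L * |x - y|) {x : ℝ} (hx : |x| ≤ R) :
    |interp f R N x - f x| ≤ 2 * L * (2 * R / N) := by
  have hmesh := mesh_pos (R := R) (N := N) hR hN
  have hxR : -R ≤ x := neg_le_of_abs_le hx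
  have hxR' : x ≤ R := le_of_abs_le hx
  set hh := 2 * R / N with hhdef
  have hfl0 : (0:ℝ) ≤ (x + R) / hh := div_nonneg (by linarith) hmesh.le
  set j := min (N - 1) (Nat.floor ((x + R) / hh)) with hjdef
  have hjN : j < N := lt_of_le_of_lt (min_le_left _ _) (Nat.pred_lt hN.ne')
  have hjle : j ≤ N := le_of_lt hjN
  have htj : knot R N j ≤ x := by
    have h1 : (j:ℝ) ≤ (x + R) / hh := by
      calc (j:ℝ) ≤ (Nat.floor ((x + R) / hh) : ℝ) := by
            exact_mod_cast min_le_right (N-1) _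
        _ ≤ (x + R) / hh := Nat.floor_le hfl0
    have h2 : (j:ℝ) * hh ≤ x + R := by
      calc (j:ℝ) * hh ≤ ((x + R) / hh) * hh := mul_le_mul_of_nonneg_right h1 hmesh.le
        _ = x + R := div_mul_cancel₀ _ (ne_of_gt hmesh)
    simp only [knot, ← hhdef]
    linarith
  have htj1 : x ≤ knot R N (j + 1) := by
    rcases le_or_gt (Nat.floor ((x + R) / hh)) (N - 1) with h | h
    · have hj_eq : j = Nat.floor ((x + R) / hh) := min_eq_right h
      have h1 : (x + R) / hh < (j:ℝ) + 1 := by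
        rw [hj_eq]; push_cast; exact Nat.lt_floor_add_one _
      have h2 : x + R < ((j:ℝ) + 1) * hh := by
        calc x + R = ((x + R) / hh) * hh := (div_mul_cancel₀ _ (ne_of_gt hmesh)).symm
          _ < ((j:ℝ) + 1) * hh := by exact mul_lt_mul_of_pos_right h1 hmesh
      simp only [knot, ← hhdef]
      push_cast
      linarith
    · have hj_eq : j = N - 1 := min_eq_left (le_of_lt h)
      have : j + 1 = N := by omega
      rw [this, knot_last hN]
      exact hxR'
  have hdist : x - knot R N j ≤ hh := by
    have := knot_succ (R := R) (N := N) j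
    rw [← hhdef] at this
    linarith [htj1, this]
  have e1 : |interp f R N x - interp f R N (knot R N j)| ≤ L * hh := by
    calc |interp f R N x - interp f R N (knot R N j)| ≤ L * |x - knot R N j| :=
          interp_lipschitz f hR hN hL0 hf _ _
      _ ≤ L * hh := by
          apply mul_le_mul_of_nonneg_left _ hL0
          rw [abs_of_nonneg (by linarith : (0:ℝ) ≤ x - knot R N j)]
          exact hdist
  have e2 : |f (knot R N j) - f x| ≤ L * hh := by
    calc |f (knot R N j) - f x| ≤ L * |knot R N j - x| := hf _ _
      _ ≤ L * hh := by
          apply mul_le_mul_of_nonneg_left _ hL0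
          rw [abs_of_nonpos (by linarith : knot R N j - x ≤ 0)]
          linarith
  calc |interp f R N x - f x|
      ≤ |interp f R N x - interp f R N (knot R N j)| + |interp f R N (knot R N j) - f x| :=
        abs_sub_le _ _ _
    _ = |interp f R N x - interp f R N (knot R N j)| + |f (knot R N j) - f x| := by
        rw [interp_knot f hR hN hjle]
    _ ≤ L * hh + L * hh := add_le_add e1 e2
    _ = 2 * L * hh := by ring

end Interp

-- NN infrastructure lemmas (to be appended after prefix)
namespace NN

lemma aff_trunc (φ : NN) (k : ℕ) (y : ℕ → ℝ) :
    φ.aff k (trunc (φ.l k) y) = φ.aff k y := by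
  funext i
  unfold aff
  congr 1
  refine Finset.sum_congr rfl (fun j hj => ?_)
  rw [trunc, if_pos (Finset.mem_range.1 hj)]

lemma comp_l_low (ψ φ : NN) {k : ℕ} (h : k < φ.depth) : (ψ.comp φ).l k = φ.l k := by
  simp [comp, if_pos h]

lemma comp_l_high (ψ φ : NN) {k : ℕ} (h : ¬ k < φ.depth) :
    (ψ.comp φ).l k = ψ.l (k + 1 - φ.depth) := by
  simp [comp, if_neg h]

lemma comp_hidden_low (a : ℝ → ℝ) (ψ φ : NN) (z : ℕ → ℝ) :
    ∀ k, k ≤ φ.Dm → (ψ.comp φ).hidden a k z = φ.hidden a k z := by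
  intro k
  induction k with
  | zero => intro _; rfl
  | succ m ih =>
      intro hm
      have hm' : m ≤ φ.Dm := Nat.le_of_succ_le hm
      have hmlt : m < φ.Dm := hm
      funext i
      show a ((ψ.comp φ).aff m ((ψ.comp φ).hidden a m z) i) = a (φ.aff m (φ.hidden a m z) i)
      rw [ih hm']
      congr 1
      unfold aff
      have hV : (ψ.comp φ).V m = φ.V m := by simp [comp, if_pos hmlt]
      have hb : (ψ.comp φ).b m = φ.b m := by simp [comp, if_pos hmlt]
      have hl : (ψ.comp φ).l m = φ.l m := comp_l_low ψ φ (by unfold depth; omega)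
      rw [hV, hb, hl]

lemma comp_aff_mid (ψ φ : NN) (v : ℕ → ℝ) (i : ℕ) :
    (ψ.comp φ).aff φ.Dm v i = ψ.aff 0 (φ.aff φ.Dm v) i := by
  have hV : (ψ.comp φ).V φ.Dm = fun i j => ∑ m ∈ Finset.range (ψ.l 0), ψ.V 0 i m * φ.V φ.Dm m j := by
    simp [comp]
  have hb : (ψ.comp φ).b φ.Dm = fun i => (∑ m ∈ Finset.range (ψ.l 0), ψ.V 0 i m * φ.b φ.Dm m) + ψ.b 0 i := by
    simp [comp]
  have hl : (ψ.comp φ).l φ.Dm = φ.l φ.Dm := comp_l_low ψ φ (by unfold depth; omega)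
  unfold aff
  rw [hV, hb, hl]
  have swap : ∑ j ∈ Finset.range (φ.l φ.Dm),
      (∑ m ∈ Finset.range (ψ.l 0), ψ.V 0 i m * φ.V φ.Dm m j) * v j
      = ∑ m ∈ Finset.range (ψ.l 0), ψ.V 0 i m *
          (∑ j ∈ Finset.range (φ.l φ.Dm), φ.V φ.Dm m j * v j) := by
    rw [Finset.sum_congr rfl (fun j (_ : j ∈ Finset.range (φ.l φ.Dm)) =>
      Finset.sum_mul (Finset.range (ψ.l 0)) (fun m => ψ.V 0 i m * φ.V φ.Dm m j) (v j)),
      Finset.sum_comm]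
    refine Finset.sum_congr rfl (fun m _ => ?_)
    rw [Finset.mul_sum]
    exact Finset.sum_congr rfl (fun j _ => by ring)
  rw [swap]
  have expand : ∑ m ∈ Finset.range (ψ.l 0),
      ψ.V 0 i m * ((∑ j ∈ Finset.range (φ.l φ.Dm), φ.V φ.Dm m j * v j) + φ.b φ.Dm m)
      = (∑ m ∈ Finset.range (ψ.l 0), ψ.V 0 i m *
          (∑ j ∈ Finset.range (φ.l φ.Dm), φ.V φ.Dm m j * v j))
        + ∑ m ∈ Finset.range (ψ.l 0), ψ.V 0 i m * φ.b φ.Dm m := by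
    rw [← Finset.sum_add_distrib]
    refine Finset.sum_congr rfl (fun m _ => by ring)
  rw [expand]
  ring

lemma comp_hidden_high (a : ℝ → ℝ) (ψ φ : NN) (x : ℕ → ℝ) :
    ∀ k, (ψ.comp φ).hidden a (φ.Dm + 1 + k) (trunc ((ψ.comp φ).l 0) x)
      = ψ.hidden a (1 + k) (trunc (ψ.l 0) (φ.fullReal a x)) := by
  have hl0 : (ψ.comp φ).l 0 = φ.l 0 := comp_l_low ψ φ (by unfold depth; omega)
  intro k
  induction k with
  | zero =>
      funext i
      show a ((ψ.comp φ).aff φ.Dm ((ψ.comp φ).hidden a φ.Dm (trunc ((ψ.comp φ).l 0) x)) i) = _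
      rw [comp_hidden_low a ψ φ _ φ.Dm le_rfl, hl0, comp_aff_mid]
      show _ = a (ψ.aff 0 (trunc (ψ.l 0) (φ.fullReal a x)) i)
      rw [aff_trunc ψ 0 (φ.fullReal a x)]
      rfl
  | succ m ih =>
      funext i
      show a ((ψ.comp φ).aff (φ.Dm + 1 + m) ((ψ.comp φ).hidden a (φ.Dm + 1 + m) (trunc ((ψ.comp φ).l 0) x)) i) = _
      rw [ih]
      have h1 : φ.Dm + 1 + m = φ.Dm + (m + 1) := by omega
      have hV : (ψ.comp φ).V (φ.Dm + 1 + m) = ψ.V (1 + m) := by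
        simp only [comp]
        rw [if_neg (show ¬ (φ.Dm + 1 + m < φ.Dm) by omega),
          if_neg (show ¬ (φ.Dm + 1 + m = φ.Dm) by omega)]
        rw [show φ.Dm + 1 + m - φ.Dm = 1 + m by omega]
      have hb : (ψ.comp φ).b (φ.Dm + 1 + m) = ψ.b (1 + m) := by
        simp only [comp]
        rw [if_neg (show ¬ (φ.Dm + 1 + m < φ.Dm) by omega),
          if_neg (show ¬ (φ.Dm + 1 + m = φ.Dm) by omega)]
        rw [show φ.Dm + 1 + m - φ.Dm = 1 + m by omega]
      have hl : (ψ.comp φ).l (φ.Dm + 1 + m) = ψ.l (1 + m) := by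
        rw [comp_l_high ψ φ (by unfold depth; omega)]
        congr 1
        unfold depth
        omega
      show a ((ψ.comp φ).aff (φ.Dm + 1 + m) (ψ.hidden a (1 + m) (trunc (ψ.l 0) (φ.fullReal a x))) i)
          = a (ψ.aff (1 + m) (ψ.hidden a (1 + m) (trunc (ψ.l 0) (φ.fullReal a x))) i)
      unfold aff
      rw [hV, hb, hl]

lemma fullReal_eq_zero (a : ℝ → ℝ) (ψ : NN) (h : ψ.Dm = 0) (y : ℕ → ℝ) (i : ℕ) :
    ψ.fullReal a y i = ψ.aff 0 y i := by
  unfold fullReal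
  rw [h]
  show ψ.aff 0 (trunc (ψ.l 0) y) i = _
  rw [aff_trunc]

lemma comp_fullReal (a : ℝ → ℝ) (ψ φ : NN) (x : ℕ → ℝ) (i : ℕ) :
    (ψ.comp φ).fullReal a x i = ψ.fullReal a (φ.fullReal a x) i := by
  have hl0 : (ψ.comp φ).l 0 = φ.l 0 := comp_l_low ψ φ (by unfold depth; omega)
  have hDm : (ψ.comp φ).Dm = φ.Dm + ψ.Dm := rfl
  cases hψ : ψ.Dm with
  | zero =>
      rw [fullReal_eq_zero a ψ hψ]
      unfold fullReal
      rw [hDm, hψ, Nat.add_zero, comp_hidden_low a ψ φ _ φ.Dm le_rfl, hl0, comp_aff_mid]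
  | succ m =>
      unfold fullReal
      rw [hDm, hψ]
      have harg : φ.Dm + (m + 1) = φ.Dm + 1 + m := by omega
      rw [harg, comp_hidden_high a ψ φ x m]
      have hV : (ψ.comp φ).V (φ.Dm + 1 + m) = ψ.V (1 + m) := by
        simp only [comp]
        rw [if_neg (show ¬ (φ.Dm + 1 + m < φ.Dm) by omega),
          if_neg (show ¬ (φ.Dm + 1 + m = φ.Dm) by omega)]
        rw [show φ.Dm + 1 + m - φ.Dm = 1 + m by omega]
      have hb : (ψ.comp φ).b (φ.Dm + 1 + m) = ψ.b (1 + m) := by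
        simp only [comp]
        rw [if_neg (show ¬ (φ.Dm + 1 + m < φ.Dm) by omega),
          if_neg (show ¬ (φ.Dm + 1 + m = φ.Dm) by omega)]
        rw [show φ.Dm + 1 + m - φ.Dm = 1 + m by omega]
      have hl : (ψ.comp φ).l (φ.Dm + 1 + m) = ψ.l (1 + m) := by
        rw [comp_l_high ψ φ (by unfold depth; omega)]
        congr 1
        unfold depth
        omega
      unfold aff
      rw [hV, hb, hl]
      have h1m : (1 + m) = m + 1 := by omega
      rw [h1m]
      rfl

end NN

-- chains of blocks, simple depth-2 blocks, index helpers

def chain (blk : ℕ → NN) : ℕ → NN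
  | 0 => blk 0
  | m + 1 => NN.comp (blk (m + 1)) (chain blk m)

lemma chain_fullReal (a : ℝ → ℝ) (blk : ℕ → NN) (m : ℕ) (x : ℕ → ℝ) (i : ℕ) :
    (chain blk (m + 1)).fullReal a x i
      = (blk (m + 1)).fullReal a ((chain blk m).fullReal a x) i :=
  NN.comp_fullReal a _ _ x i

lemma chain_fullReal' (a : ℝ → ℝ) (blk : ℕ → NN) (m : ℕ) (x : ℕ → ℝ) :
    (chain blk (m + 1)).fullReal a x
      = (blk (m + 1)).fullReal a ((chain blk m).fullReal a x) := by
  funext i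
  exact NN.comp_fullReal a _ _ x i

lemma chain_Dm (blk : ℕ → NN) (h : ∀ k, (blk k).Dm = 1) :
    ∀ m, (chain blk m).Dm = m + 1 := by
  intro m
  induction m with
  | zero => exact h 0
  | succ k ih =>
      show (chain blk k).Dm + (blk (k+1)).Dm = k + 1 + 1
      rw [ih, h (k+1)]

lemma chain_l0 (blk : ℕ → NN) : ∀ m, (chain blk m).l 0 = (blk 0).l 0 := by
  intro m
  induction m with
  | zero => rfl
  | succ k ih =>
      rw [show (chain blk (k+1)).l 0 = (chain blk k).l 0 from
        NN.comp_l_low _ _ (by unfold NN.depth; omega), ih]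

lemma chain_l_mid (blk : ℕ → NN) (h : ∀ k, (blk k).Dm = 1) :
    ∀ m, ∀ k ≤ m, (chain blk m).l (k + 1) = (blk k).l 1 := by
  intro m
  induction m with
  | zero =>
      intro k hk
      interval_cases k
      rfl
  | succ n ih =>
      intro k hk
      have hdep : (chain blk n).depth = n + 2 := by unfold NN.depth; rw [chain_Dm blk h]
      rcases Nat.lt_or_ge k (n + 1) with hlt | hge
      · rw [show (chain blk (n+1)).l (k+1) = (chain blk n).l (k+1) from
          NN.comp_l_low _ _ (by omega), ih k (by omega)]
      · have hk1 : k = n + 1 := by omega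
        subst hk1
        show (NN.comp (blk (n+1)) (chain blk n)).l (n + 1 + 1) = _
        rw [NN.comp_l_high (blk (n+1)) (chain blk n) (by rw [hdep]; omega), hdep,
          show n + 1 + 1 + 1 - (n + 2) = 1 by omega]

lemma chain_l_top (blk : ℕ → NN) (h : ∀ k, (blk k).Dm = 1) :
    ∀ m, (chain blk m).l (m + 2) = (blk m).l 2 := by
  intro m
  cases m with
  | zero => rfl
  | succ n =>
      have hdep : (chain blk n).depth = n + 2 := by unfold NN.depth; rw [chain_Dm blk h]
      show (NN.comp (blk (n+1)) (chain blk n)).l (n + 1 + 2) = _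
      rw [NN.comp_l_high (blk (n+1)) (chain blk n) (by rw [hdep]; omega), hdep,
        show n + 1 + 2 + 1 - (n + 2) = 2 by omega]

def dl (i j : ℕ) : ℝ := if j = i then 1 else 0

lemma sum_dl_mul {n i : ℕ} (h : i < n) (F : ℕ → ℝ) :
    ∑ j ∈ Finset.range n, dl i j * F j = F i := by
  rw [Finset.sum_eq_single i]
  · simp [dl]
  · intro b _ hb
    simp [dl, hb]
  · intro h'
    exact absurd (Finset.mem_range.2 h) h'

lemma sum_range_add' (F : ℕ → ℝ) (M n : ℕ) :
    ∑ p ∈ Finset.range (M + n), F p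
      = (∑ p ∈ Finset.range M, F p) + ∑ j ∈ Finset.range n, F (M + j) := by
  induction n with
  | zero => simp
  | succ k ih =>
      rw [show M + (k + 1) = (M + k) + 1 from rfl, Finset.sum_range_succ, ih,
        Finset.sum_range_succ]
      ring

lemma sum_range_mul_decomp (F : ℕ → ℝ) (a b : ℕ) :
    ∑ p ∈ Finset.range (a * b), F p
      = ∑ c ∈ Finset.range a, ∑ j ∈ Finset.range b, F (c * b + j) := by
  induction a with
  | zero => simp
  | succ m ih =>
      rw [Nat.succ_mul, sum_range_add' F (m * b) b, ih, Finset.sum_range_succ]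

def mkBlock (n0 n1 n2 : ℕ) (V0 : ℕ → ℕ → ℝ) (b0 : ℕ → ℝ) (V1 : ℕ → ℕ → ℝ) (b1 : ℕ → ℝ) : NN :=
  ⟨1, fun k => if k = 0 then n0 else if k = 1 then n1 else n2,
     fun k => if k = 0 then V0 else V1,
     fun k => if k = 0 then b0 else b1⟩

@[simp] lemma mkBlock_Dm (n0 n1 n2 V0 b0 V1 b1) : (mkBlock n0 n1 n2 V0 b0 V1 b1).Dm = 1 := rfl
@[simp] lemma mkBlock_l0 (n0 n1 n2 V0 b0 V1 b1) : (mkBlock n0 n1 n2 V0 b0 V1 b1).l 0 = n0 := rfl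
@[simp] lemma mkBlock_l1 (n0 n1 n2 V0 b0 V1 b1) : (mkBlock n0 n1 n2 V0 b0 V1 b1).l 1 = n1 := rfl
@[simp] lemma mkBlock_l2 (n0 n1 n2 V0 b0 V1 b1) : (mkBlock n0 n1 n2 V0 b0 V1 b1).l 2 = n2 := rfl

lemma mkBlock_fullReal (n0 n1 n2 V0 b0 V1 b1) (a : ℝ → ℝ) (x : ℕ → ℝ) (i : ℕ) :
    (mkBlock n0 n1 n2 V0 b0 V1 b1).fullReal a x i
      = (∑ p ∈ Finset.range n1,
          V1 i p * a ((∑ j ∈ Finset.range n0, V0 p j * trunc n0 x j) + b0 p)) + b1 i := by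
  show (mkBlock n0 n1 n2 V0 b0 V1 b1).aff 1
      ((mkBlock n0 n1 n2 V0 b0 V1 b1).hidden a 1 (trunc n0 x)) i = _
  unfold NN.aff NN.hidden
  simp [mkBlock, NN.aff]
  rfl

lemma sum_neg_dl_mul {n i : ℕ} (h : i < n) (F : ℕ → ℝ) :
    ∑ j ∈ Finset.range n, -dl i j * F j = -F i := by
  rw [Finset.sum_congr rfl (fun j _ => by ring :
      ∀ j ∈ Finset.range n, -dl i j * F j = dl i j * -F j),
    sum_dl_mul h (fun j => -F j)]

lemma sum_dl_sub_mul {n i0 i1 : ℕ} (h0 : i0 < n) (h1 : i1 < n) (F : ℕ → ℝ) :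
    ∑ p ∈ Finset.range n, (dl i0 p - dl i1 p) * F p = F i0 - F i1 := by
  rw [Finset.sum_congr rfl (fun p _ => by ring :
      ∀ p ∈ Finset.range n, (dl i0 p - dl i1 p) * F p = dl i0 p * F p - dl i1 p * F p),
    Finset.sum_sub_distrib, sum_dl_mul h0 F, sum_dl_mul h1 F]

lemma sum_dl_add_sub_mul {n i0 i1 i2 : ℕ} (h0 : i0 < n) (h1 : i1 < n) (h2 : i2 < n) (F : ℕ → ℝ) :
    ∑ p ∈ Finset.range n, (dl i0 p + dl i1 p - dl i2 p) * F p = F i0 + F i1 - F i2 := by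
  rw [Finset.sum_congr rfl (fun p _ => by ring :
      ∀ p ∈ Finset.range n, (dl i0 p + dl i1 p - dl i2 p) * F p
        = (dl i0 p * F p + dl i1 p * F p) - dl i2 p * F p),
    Finset.sum_sub_distrib, Finset.sum_add_distrib, sum_dl_mul h0 F, sum_dl_mul h1 F, sum_dl_mul h2 F]

namespace Constr
open Interp

/-- First block: computes all `y_c = interp (f (c+1)) r N (x c)` in parallel. -/
def B0 (f : ℕ → ℝ → ℝ) (r : ℝ) (N D : ℕ) : NN :=
  mkBlock D (D * (N + 1)) D
    (fun p j => dl (p / (N + 1)) j)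
    (fun p => -(knot r N (p % (N + 1))))
    (fun i p => if p / (N + 1) = i then coeffA (f (i + 1)) r N (p % (N + 1)) else 0)
    (fun i => f (i + 1) (-r))

lemma B0_real (f : ℕ → ℝ → ℝ) (r : ℝ) (N D : ℕ) (x : ℕ → ℝ) (i : ℕ) (hi : i < D) :
    (B0 f r N D).fullReal ReLU x i = interp (f (i + 1)) r N (trunc D x i) := by
  rw [B0, mkBlock_fullReal]
  have hin : ∀ p ∈ Finset.range (D * (N + 1)),
      (if p / (N + 1) = i then coeffA (f (i + 1)) r N (p % (N + 1)) else 0) *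
        ReLU ((∑ j ∈ Finset.range D, dl (p / (N + 1)) j * trunc D x j) + -(knot r N (p % (N + 1))))
      = (if p / (N + 1) = i then coeffA (f (i + 1)) r N (p % (N + 1)) else 0) *
        ReLU (trunc D x (p / (N + 1)) - knot r N (p % (N + 1))) := by
    intro p hp
    have hpd : p / (N + 1) < D := Nat.div_lt_of_lt_mul (by
      rw [Nat.mul_comm]
      exact Finset.mem_range.1 hp)
    rw [sum_dl_mul hpd]
    ring_nf
  rw [Finset.sum_congr rfl hin, sum_range_mul_decomp]
  have hcj : ∀ c ∈ Finset.range D, ∀ j ∈ Finset.range (N + 1),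
      (if (c * (N + 1) + j) / (N + 1) = i then
          coeffA (f (i + 1)) r N ((c * (N + 1) + j) % (N + 1)) else 0) *
        ReLU (trunc D x ((c * (N + 1) + j) / (N + 1)) - knot r N ((c * (N + 1) + j) % (N + 1)))
      = if c = i then coeffA (f (i + 1)) r N j * ReLU (trunc D x i - knot r N j) else 0 := by
    intro c _ j hj
    have hdiv : (c * (N + 1) + j) / (N + 1) = c := by
      rw [Nat.mul_comm c (N + 1), Nat.mul_add_div (Nat.succ_pos N),
        Nat.div_eq_of_lt (Finset.mem_range.1 hj), Nat.add_zero]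
    have hmod : (c * (N + 1) + j) % (N + 1) = j := by
      rw [Nat.mul_comm c (N + 1), Nat.mul_add_mod, Nat.mod_eq_of_lt (Finset.mem_range.1 hj)]
    rw [hdiv, hmod]
    by_cases hc : c = i
    · rw [if_pos hc, if_pos hc, hc]
    · rw [if_neg hc, if_neg hc, zero_mul]
  rw [Finset.sum_congr rfl (fun c hc => Finset.sum_congr rfl (fun j hj => hcj c hc j hj))]
  have hsum : ∑ c ∈ Finset.range D, ∑ j ∈ Finset.range (N + 1),
      (if c = i then coeffA (f (i + 1)) r N j * ReLU (trunc D x i - knot r N j) else 0)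
      = ∑ j ∈ Finset.range (N + 1), coeffA (f (i + 1)) r N j * ReLU (trunc D x i - knot r N j) := by
    have hmove : ∀ c ∈ Finset.range D, ∑ j ∈ Finset.range (N + 1),
        (if c = i then coeffA (f (i + 1)) r N j * ReLU (trunc D x i - knot r N j) else 0)
        = if c = i then
            (∑ j ∈ Finset.range (N + 1), coeffA (f (i + 1)) r N j * ReLU (trunc D x i - knot r N j))
          else 0 := by
      intro c _
      by_cases hc : c = i
      · simp [hc]
      · simp [hc]
    rw [Finset.sum_congr rfl hmove, Finset.sum_ite_eq' (Finset.range D) i, if_pos (Finset.mem_range.2 hi)]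
  rw [hsum]
  unfold interp
  ring

/-- Max block: input `(S, y, c_1, …, c_{w-1})`, output `(max S y, c_1, …, c_{w-1})`. -/
def Mblk (w : ℕ) : NN :=
  mkBlock (w + 1) (2 * w + 1) w
    (fun p j =>
      if p = 0 then dl 1 j - dl 0 j
      else if p = 1 then dl 0 j
      else if p = 2 then -dl 0 j
      else if (p - 3) % 2 = 0 then dl ((p - 3) / 2 + 2) j
      else -dl ((p - 3) / 2 + 2) j)
    (fun _ => 0)
    (fun k p => if k = 0 then dl 0 p + dl 1 p - dl 2 p else dl (2 * k + 1) p - dl (2 * k + 2) p)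
    (fun _ => 0)

lemma Mblk_real (w : ℕ) (hw : 1 ≤ w) (v : ℕ → ℝ) (k : ℕ) (hk : k < w) :
    (Mblk w).fullReal ReLU v k
      = if k = 0 then max (trunc (w + 1) v 0) (trunc (w + 1) v 1) else trunc (w + 1) v (k + 1) := by
  rw [Mblk, mkBlock_fullReal]
  by_cases hk0 : k = 0
  · subst hk0
    simp only [reduceIte, add_zero]
    rw [sum_dl_add_sub_mul (show 0 < 2*w+1 by omega) (show 1 < 2*w+1 by omega)
      (show 2 < 2*w+1 by omega)]
    simp only [if_neg (show ¬ (1:ℕ) = 0 by omega), if_pos (show (1:ℕ) = 1 from rfl),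
      if_neg (show ¬ (2:ℕ) = 0 by omega), if_neg (show ¬ (2:ℕ) = 1 by omega),
      if_pos (show (2:ℕ) = 2 from rfl), reduceIte, add_zero]
    rw [sum_dl_sub_mul (show 1 < w+1 by omega) (show 0 < w+1 by omega),
      sum_dl_mul (show 0 < w+1 by omega), sum_neg_dl_mul (show 0 < w+1 by omega)]
    have h1 := relu_sub_relu_neg (trunc (w+1) v 0)
    have h2 := add_relu_sub (trunc (w+1) v 0) (trunc (w+1) v 1)
    linarith
  · simp only [if_neg hk0, add_zero]
    rw [sum_dl_sub_mul (show 2*k+1 < 2*w+1 by omega) (show 2*k+2 < 2*w+1 by omega)]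
    simp only [if_neg (show ¬ 2*k+1 = 0 by omega), if_neg (show ¬ 2*k+1 = 1 by omega),
      if_neg (show ¬ 2*k+1 = 2 by omega), if_pos (show (2*k+1-3) % 2 = 0 by omega),
      show (2*k+1-3)/2 + 2 = k + 1 by omega,
      if_neg (show ¬ 2*k+2 = 0 by omega), if_neg (show ¬ 2*k+2 = 1 by omega),
      if_neg (show ¬ 2*k+2 = 2 by omega), if_neg (show ¬ (2*k+2-3) % 2 = 0 by omega),
      show (2*k+2-3)/2 + 2 = k + 1 by omega, add_zero]
    rw [sum_dl_mul (show k+1 < w+1 by omega), sum_neg_dl_mul (show k+1 < w+1 by omega),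
      relu_sub_relu_neg]

/-- Interpolated-`g` block: input `(U, c_1, …, c_{w-1})`,
output `(interp G1 Bv N U, c_1, …, c_{w-1})`. -/
def Gblk (G1 : ℝ → ℝ) (Bv : ℝ) (N w : ℕ) : NN :=
  mkBlock w (N + 1 + 2 * (w - 1)) w
    (fun p j =>
      if p < N + 1 then dl 0 j
      else if (p - (N + 1)) % 2 = 0 then dl ((p - (N + 1)) / 2 + 1) j
      else -dl ((p - (N + 1)) / 2 + 1) j)
    (fun p => if p < N + 1 then -(knot Bv N p) else 0)
    (fun k p => if k = 0 then (if p < N + 1 then coeffA G1 Bv N p else 0)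
      else dl (N + 1 + 2 * (k - 1)) p - dl (N + 2 + 2 * (k - 1)) p)
    (fun k => if k = 0 then G1 (-Bv) else 0)

lemma Gblk_real (G1 : ℝ → ℝ) (Bv : ℝ) (N w : ℕ) (hw : 1 ≤ w) (v : ℕ → ℝ) (k : ℕ) (hk : k < w) :
    (Gblk G1 Bv N w).fullReal ReLU v k
      = if k = 0 then interp G1 Bv N (trunc w v 0) else trunc w v k := by
  rw [Gblk, mkBlock_fullReal]
  by_cases hk0 : k = 0
  · subst hk0
    simp only [reduceIte]
    have hsplit : ∑ p ∈ Finset.range (N + 1 + 2 * (w - 1)),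
        (if p < N + 1 then coeffA G1 Bv N p else 0) *
          ReLU ((∑ j ∈ Finset.range w,
            (if p < N + 1 then dl 0 j
              else if (p - (N + 1)) % 2 = 0 then dl ((p - (N + 1)) / 2 + 1) j
              else -dl ((p - (N + 1)) / 2 + 1) j) * trunc w v j)
            + (if p < N + 1 then -(knot Bv N p) else 0))
        = ∑ p ∈ Finset.range (N + 1), coeffA G1 Bv N p * ReLU (trunc w v 0 - knot Bv N p) := by
      rw [sum_range_add']
      have e2 : ∀ j ∈ Finset.range (2 * (w - 1)),
          (if N + 1 + j < N + 1 then coeffA G1 Bv N (N + 1 + j) else 0) *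
            ReLU ((∑ j' ∈ Finset.range w,
              (if N + 1 + j < N + 1 then dl 0 j'
                else if (N + 1 + j - (N + 1)) % 2 = 0 then dl ((N + 1 + j - (N + 1)) / 2 + 1) j'
                else -dl ((N + 1 + j - (N + 1)) / 2 + 1) j') * trunc w v j')
              + (if N + 1 + j < N + 1 then -(knot Bv N (N + 1 + j)) else 0)) = 0 := by
        intro j _
        rw [if_neg (show ¬ N + 1 + j < N + 1 by omega), zero_mul]
      rw [Finset.sum_congr rfl e2, Finset.sum_const, smul_zero, add_zero]
      refine Finset.sum_congr rfl (fun p hp => ?_)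
      have hp' : p < N + 1 := Finset.mem_range.1 hp
      rw [if_pos hp']
      simp only [if_pos hp']
      rw [sum_dl_mul (show 0 < w by omega),
        show trunc w v 0 + -(knot Bv N p) = trunc w v 0 - knot Bv N p by ring]
    rw [hsplit]
    unfold interp
    ring
  · simp only [if_neg hk0]
    rw [sum_dl_sub_mul (show N+1+2*(k-1) < N+1+2*(w-1) by omega)
      (show N+2+2*(k-1) < N+1+2*(w-1) by omega)]
    simp only [if_neg (show ¬ N+1+2*(k-1) < N + 1 by omega),
      if_pos (show (N+1+2*(k-1) - (N+1)) % 2 = 0 by omega),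
      show (N+1+2*(k-1) - (N+1))/2 + 1 = k by omega,
      if_neg (show ¬ N+2+2*(k-1) < N + 1 by omega),
      if_neg (show ¬ (N+2+2*(k-1) - (N+1)) % 2 = 0 by omega),
      show (N+2+2*(k-1) - (N+1))/2 + 1 = k by omega, add_zero]
    rw [sum_dl_mul (show k < w by omega), sum_neg_dl_mul (show k < w by omega),
      relu_sub_relu_neg]

end Constr

namespace Constr
open Interp

def Yf (f : ℕ → ℝ → ℝ) (r : ℝ) (N : ℕ) (c : ℕ) (v : ℕ → ℝ) : ℝ :=
  interp (f (c + 1)) r N (v c)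

def Sf (f g : ℕ → ℝ → ℝ) (r Bv : ℝ) (N : ℕ) : ℕ → (ℕ → ℝ) → ℝ
  | 0 => fun v => Yf f r N 0 v
  | i + 1 => fun v =>
      interp (g (i + 2)) Bv N (max (Sf f g r Bv N i v) (Yf f r N (i + 1) v))

def res (i : ℕ) (v : ℕ → ℝ) : EuclideanSpace ℝ (Fin (i + 1)) := WithLp.toLp 2 fun c => v c

lemma res_castSucc (i : ℕ) (v : ℕ → ℝ) :
    WithLp.toLp 2 (fun c : Fin (i + 1) => res (i + 1) v c.castSucc) = res i v := by
  ext c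
  simp [res]

section Analysis

variable {f g : ℕ → ℝ → ℝ} {K r : ℝ} {N : ℕ}
variable (hK : 1 ≤ K) (hr : 1 ≤ r) (hN : 0 < N)
variable (hfLip : ∀ i : ℕ, ∀ x y : ℝ, |f i x - f i y| ≤ K * |x - y|)
variable (hf0 : ∀ i : ℕ, |f i 0| ≤ K)
variable (hgLip : ∀ i : ℕ, ∀ x y : ℝ, |g i x - g i y| ≤ |x - y|)
variable (hg0 : ∀ i : ℕ, g i 0 = 0)

include hK hr hfLip hf0 in
lemma f_bound (i : ℕ) {x : ℝ} (hx : |x| ≤ r) : |f i x| ≤ 2 * K * r := by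
  have h1 : |f i x - f i 0| ≤ K * |x - 0| := hfLip i x 0
  have h2 : |f i x| ≤ |f i x - f i 0| + |f i 0| := by
    calc |f i x| = |(f i x - f i 0) + f i 0| := by ring_nf
      _ ≤ |f i x - f i 0| + |f i 0| := abs_add_le _ _
  have h3 : K * |x - 0| ≤ K * r := by
    apply mul_le_mul_of_nonneg_left _ (by linarith)
    simpa using hx
  have hKr : K ≤ K * r := by nlinarith
  linarith [hf0 i]

include hgLip hg0 in
lemma g_bound (i : ℕ) (x : ℝ) : |g i x| ≤ |x| := by
  have := hgLip i x 0
  rw [hg0 i] at this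
  simpa using this

include hK hr hfLip hf0 hgLip hg0 in
lemma hrec_bound : ∀ d : ℕ, ∀ z : EuclideanSpace ℝ (Fin (d + 1)),
    (∀ c, |z c| ≤ r) → |hrec f g d z| ≤ 2 * K * r := by
  intro d
  induction d with
  | zero =>
      intro z hz
      exact f_bound hK hr hfLip hf0 1 (hz 0)
  | succ n ih =>
      intro z hz
      show |g (n + 2) (max (hrec f g n (WithLp.toLp 2 fun i : Fin (n + 1) => z i.castSucc)) (f (n + 2) (z (Fin.last (n + 1)))))| ≤ _
      have h1 := g_bound hgLip hg0 (n + 2)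
        (max (hrec f g n (WithLp.toLp 2 fun i : Fin (n + 1) => z i.castSucc)) (f (n + 2) (z (Fin.last (n + 1)))))
      have h2 : |hrec f g n (WithLp.toLp 2 fun i : Fin (n + 1) => z i.castSucc)| ≤ 2 * K * r := ih _ (fun c => hz _)
      have h3 : |f (n + 2) (z (Fin.last (n + 1)))| ≤ 2 * K * r :=
        f_bound hK hr hfLip hf0 _ (hz _)
      have h4 := abs_max_le_max_abs_abs (a := hrec f g n (WithLp.toLp 2 fun i : Fin (n + 1) => z i.castSucc))
        (b := f (n + 2) (z (Fin.last (n + 1))))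
      have h5 : max |hrec f g n (WithLp.toLp 2 fun i : Fin (n + 1) => z i.castSucc)| |f (n + 2) (z (Fin.last (n + 1)))|
          ≤ 2 * K * r := max_le h2 h3
      linarith

variable {Bv : ℝ} (hBv : 0 < Bv) (hr0 : 0 < r)

include hK hr hN hr0 hBv hfLip hgLip in
lemma Sf_lip : ∀ i : ℕ, ∀ v w : ℕ → ℝ, ∀ M : ℝ, 0 ≤ M →
    (∀ c, c ≤ i → |v c - w c| ≤ M) → |Sf f g r Bv N i v - Sf f g r Bv N i w| ≤ K * M := by
  intro i
  induction i with
  | zero =>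
      intro v w M hM hc
      calc |Sf f g r Bv N 0 v - Sf f g r Bv N 0 w|
          = |interp (f 1) r N (v 0) - interp (f 1) r N (w 0)| := rfl
        _ ≤ K * |v 0 - w 0| := interp_lipschitz (f 1) hr0 hN (by linarith) (hfLip 1) _ _
        _ ≤ K * M := mul_le_mul_of_nonneg_left (hc 0 (by omega)) (by linarith)
  | succ n ih =>
      intro v w M hM hc
      have hYlip : |Yf f r N (n + 1) v - Yf f r N (n + 1) w| ≤ K * M := by
        calc |Yf f r N (n + 1) v - Yf f r N (n + 1) w|
            ≤ K * |v (n + 1) - w (n + 1)| :=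
              interp_lipschitz (f (n + 2)) hr0 hN (by linarith) (hfLip (n + 2)) _ _
          _ ≤ K * M := mul_le_mul_of_nonneg_left (hc (n + 1) le_rfl) (by linarith)
      have hSlip : |Sf f g r Bv N n v - Sf f g r Bv N n w| ≤ K * M :=
        ih v w M hM (fun c hcn => hc c (by omega))
      have hmax : |max (Sf f g r Bv N n v) (Yf f r N (n + 1) v)
          - max (Sf f g r Bv N n w) (Yf f r N (n + 1) w)|
          ≤ K * M := by
        calc |max (Sf f g r Bv N n v) (Yf f r N (n + 1) v)
            - max (Sf f g r Bv N n w) (Yf f r N (n + 1) w)|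
            ≤ max |Sf f g r Bv N n v - Sf f g r Bv N n w|
              |Yf f r N (n + 1) v - Yf f r N (n + 1) w| := abs_max_sub_max_le_max _ _ _ _
          _ ≤ K * M := max_le hSlip hYlip
      calc |Sf f g r Bv N (n + 1) v - Sf f g r Bv N (n + 1) w|
          = |interp (g (n + 2)) Bv N (max (Sf f g r Bv N n v) (Yf f r N (n + 1) v))
              - interp (g (n + 2)) Bv N (max (Sf f g r Bv N n w) (Yf f r N (n + 1) w))| := rfl
        _ ≤ 1 * |max (Sf f g r Bv N n v) (Yf f r N (n + 1) v)
              - max (Sf f g r Bv N n w) (Yf f r N (n + 1) w)| :=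
            interp_lipschitz (g (n + 2)) hBv hN (by norm_num) (fun x y => by
              rw [one_mul]; exact hgLip (n + 2) x y) _ _
        _ ≤ K * M := by rw [one_mul]; exact hmax

include hK hr hN hr0 hfLip hf0 hgLip hg0 in
lemma Sf_err (hBv2 : Bv = 2 * K * r + 1) :
    ∀ i : ℕ, ∀ v : ℕ → ℝ,
    (2 * K * (2 * r / N)) + i * (2 * 1 * (2 * Bv / N)) ≤ 1 →
    (∀ c, c ≤ i → |v c| ≤ r) →
    |Sf f g r Bv N i v - hrec f g i (res i v)|
      ≤ (2 * K * (2 * r / N)) + i * (2 * 1 * (2 * Bv / N)) := by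
  have hBv : (0:ℝ) < Bv := by nlinarith
  have hgLip1 : ∀ i : ℕ, ∀ x y : ℝ, |g i x - g i y| ≤ 1 * |x - y| := fun i x y => by
    rw [one_mul]; exact hgLip i x y
  have hα : (0:ℝ) ≤ 2 * K * (2 * r / N) := by positivity
  have hβ : (0:ℝ) ≤ 2 * 1 * (2 * Bv / N) := by positivity
  intro i
  induction i with
  | zero =>
      intro v _ hbox
      have : |Sf f g r Bv N 0 v - hrec f g 0 (res 0 v)|
          = |interp (f 1) r N (v 0) - f 1 (v 0)| := rfl
      rw [this]
      have := interp_error (f 1) hr0 hN (by linarith : (0:ℝ) ≤ K) (hfLip 1) (hbox 0 (by omega))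
      push_cast
      linarith
  | succ n ih =>
      intro v hsmall hbox
      have hsmall' : (2 * K * (2 * r / N)) + n * (2 * 1 * (2 * Bv / N)) ≤ 1 := by
        push_cast at hsmall ⊢
        nlinarith
      have hprev := ih v hsmall' (fun c hcn => hbox c (by omega))
      -- bounds on the max arguments
      have hhrec : |hrec f g n (res n v)| ≤ 2 * K * r :=
        hrec_bound hK hr hfLip hf0 hgLip hg0 n (res n v) (fun c => hbox c (by
          have := c.isLt; omega))
      have hSbound : |Sf f g r Bv N n v| ≤ Bv := by
        have : |Sf f g r Bv N n v| ≤ |hrec f g n (res n v)|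
            + |Sf f g r Bv N n v - hrec f g n (res n v)| := by
          have := abs_add_le (hrec f g n (res n v)) (Sf f g r Bv N n v - hrec f g n (res n v))
          calc |Sf f g r Bv N n v|
              = |hrec f g n (res n v) + (Sf f g r Bv N n v - hrec f g n (res n v))| := by ring_nf
            _ ≤ _ := this
        have h1 : (2 * K * (2 * r / N)) + n * (2 * 1 * (2 * Bv / N)) ≤ 1 := hsmall'
        calc |Sf f g r Bv N n v| ≤ 2 * K * r + 1 := by linarith
          _ = Bv := hBv2.symm
      have hfb : |f (n + 2) (v (n + 1))| ≤ 2 * K * r :=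
        f_bound hK hr hfLip hf0 (n + 2) (hbox (n + 1) le_rfl)
      have hYerr : |Yf f r N (n + 1) v - f (n + 2) (v (n + 1))| ≤ 2 * K * (2 * r / N) :=
        interp_error (f (n + 2)) hr0 hN (by linarith) (hfLip (n + 2)) (hbox (n + 1) le_rfl)
      have hYbound : |Yf f r N (n + 1) v| ≤ Bv := by
        have : |Yf f r N (n + 1) v| ≤ |f (n + 2) (v (n + 1))|
            + |Yf f r N (n + 1) v - f (n + 2) (v (n + 1))| := by
          have := abs_add_le (f (n + 2) (v (n + 1))) (Yf f r N (n + 1) v - f (n + 2) (v (n + 1)))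
          calc |Yf f r N (n + 1) v|
              = |f (n + 2) (v (n + 1)) + (Yf f r N (n + 1) v - f (n + 2) (v (n + 1)))| := by
                ring_nf
            _ ≤ _ := this
        have hle1 : 2 * K * (2 * r / N) ≤ 1 := by
          have h2 : (0:ℝ) ≤ (n + 1 : ℕ) * (2 * 1 * (2 * Bv / N)) := by positivity
          linarith
        calc |Yf f r N (n + 1) v| ≤ 2 * K * r + 1 := by linarith
          _ = Bv := hBv2.symm
      set U := max (Sf f g r Bv N n v) (Yf f r N (n + 1) v) with hU
      set Utrue := max (hrec f g n (res n v)) (f (n + 2) (v (n + 1))) with hUtrue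
      have hUbound : |U| ≤ Bv := by
        rw [hU]
        calc |max (Sf f g r Bv N n v) (Yf f r N (n + 1) v)|
            ≤ max |Sf f g r Bv N n v| |Yf f r N (n + 1) v| := abs_max_le_max_abs_abs
          _ ≤ Bv := max_le hSbound hYbound
      have hUdiff : |U - Utrue| ≤ (2 * K * (2 * r / N)) + n * (2 * 1 * (2 * Bv / N)) := by
        rw [hU, hUtrue]
        calc |max (Sf f g r Bv N n v) (Yf f r N (n + 1) v)
            - max (hrec f g n (res n v)) (f (n + 2) (v (n + 1)))|
            ≤ max |Sf f g r Bv N n v - hrec f g n (res n v)|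
                |Yf f r N (n + 1) v - f (n + 2) (v (n + 1))| := abs_max_sub_max_le_max _ _ _ _
          _ ≤ _ := by
              apply max_le hprev
              linarith [hYerr, mul_nonneg (Nat.cast_nonneg n : (0:ℝ) ≤ n) hβ]
      have hrec_eq : hrec f g (n + 1) (res (n + 1) v) = g (n + 2) Utrue := by
        show g (n + 2) (max (hrec f g n (WithLp.toLp 2 fun c : Fin (n + 1) => res (n + 1) v c.castSucc))
          (f (n + 2) (res (n + 1) v (Fin.last (n + 1))))) = _
        rw [res_castSucc, hUtrue]
        rfl
      have hSf_eq : Sf f g r Bv N (n + 1) v = interp (g (n + 2)) Bv N U := rfl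
      rw [hSf_eq, hrec_eq]
      have e1 : |interp (g (n + 2)) Bv N U - g (n + 2) U| ≤ 2 * 1 * (2 * Bv / N) :=
        interp_error (g (n + 2)) hBv hN (by norm_num) (hgLip1 (n + 2)) hUbound
      have e2 : |g (n + 2) U - g (n + 2) Utrue| ≤ |U - Utrue| := by
        have := hgLip (n + 2) U Utrue
        linarith
      calc |interp (g (n + 2)) Bv N U - g (n + 2) Utrue|
          ≤ |interp (g (n + 2)) Bv N U - g (n + 2) U| + |g (n + 2) U - g (n + 2) Utrue| :=
            abs_sub_le _ _ _
        _ ≤ 2 * 1 * (2 * Bv / N) + ((2 * K * (2 * r / N)) + n * (2 * 1 * (2 * Bv / N))) := by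
            linarith [e1, e2, hUdiff]
        _ = (2 * K * (2 * r / N)) + (n + 1 : ℕ) * (2 * 1 * (2 * Bv / N)) := by
            push_cast
            ring

end Analysis
end Constr

namespace Constr
open Interp

def blocks (f g : ℕ → ℝ → ℝ) (r Bv : ℝ) (N D : ℕ) : ℕ → NN := fun m =>
  if m = 0 then B0 f r N D
  else if m % 2 = 1 then Mblk (D - (m + 1) / 2)
  else Gblk (g (m / 2 + 1)) Bv N (D - m / 2)

lemma blocks_Dm (f g : ℕ → ℝ → ℝ) (r Bv : ℝ) (N D : ℕ) :
    ∀ m, (blocks f g r Bv N D m).Dm = 1 := by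
  intro m
  unfold blocks
  split_ifs <;> rfl

lemma blocks_zero (f g : ℕ → ℝ → ℝ) (r Bv : ℝ) (N D : ℕ) :
    blocks f g r Bv N D 0 = B0 f r N D := if_pos rfl

lemma blocks_odd (f g : ℕ → ℝ → ℝ) (r Bv : ℝ) (N D : ℕ) (i : ℕ) :
    blocks f g r Bv N D (2 * i + 1) = Mblk (D - (i + 1)) := by
  unfold blocks
  rw [if_neg (by omega), if_pos (by omega), show (2 * i + 1 + 1) / 2 = i + 1 by omega]

lemma blocks_even (f g : ℕ → ℝ → ℝ) (r Bv : ℝ) (N D : ℕ) (i : ℕ) :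
    blocks f g r Bv N D (2 * i + 2) = Gblk (g (i + 2)) Bv N (D - (i + 1)) := by
  unfold blocks
  rw [if_neg (by omega), if_neg (by omega), show (2 * i + 2) / 2 = i + 1 by omega]

lemma trunc_lt {n j : ℕ} (h : j < n) (u : ℕ → ℝ) : trunc n u j = u j := if_pos h

lemma net_real (f g : ℕ → ℝ → ℝ) (r Bv : ℝ) (N D : ℕ) (hD : 1 ≤ D) :
    ∀ i, i ≤ D - 1 → ∀ v : ℕ → ℝ, ∀ k, k < D - i →
      (chain (blocks f g r Bv N D) (2 * i)).fullReal ReLU v k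
        = if k = 0 then Sf f g r Bv N i (trunc D v) else Yf f r N (i + k) (trunc D v) := by
  intro i
  induction i with
  | zero =>
      intro _ v k hk
      have hk' : k < D := by omega
      rw [show chain (blocks f g r Bv N D) (2 * 0) = B0 f r N D from blocks_zero f g r Bv N D,
        B0_real f r N D v k hk']
      by_cases hk0 : k = 0
      · subst hk0
        rw [if_pos rfl]
        rfl
      · rw [if_neg hk0]
        show Yf f r N k (trunc D v) = _
        rw [Nat.zero_add]
  | succ n ih =>
      intro hn v k hk
      have hw : 1 ≤ D - (n + 1) := by omega
      rw [show 2 * (n + 1) = (2 * n + 1) + 1 by ring, chain_fullReal, chain_fullReal',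
        show (2 * n + 1) + 1 = 2 * n + 2 by ring, blocks_even, blocks_odd]
      set u0 := (chain (blocks f g r Bv N D) (2 * n)).fullReal ReLU v with hu0
      rw [Gblk_real (g (n + 2)) Bv N (D - (n + 1)) hw _ k hk]
      have hmem0 : (0:ℕ) < D - (n + 1) + 1 := by omega
      have hmem1 : (1:ℕ) < D - (n + 1) + 1 := by omega
      have hIH : ∀ j, j < D - n →
          u0 j = if j = 0 then Sf f g r Bv N n (trunc D v) else Yf f r N (n + j) (trunc D v) :=
        fun j hj => ih (by omega) v j hj
      by_cases hk0 : k = 0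
      · subst hk0
        rw [if_pos rfl, if_pos rfl, trunc_lt (by omega),
          Mblk_real (D - (n + 1)) hw _ 0 (by omega), if_pos rfl,
          trunc_lt hmem0, trunc_lt hmem1, hIH 0 (by omega), hIH 1 (by omega),
          if_pos rfl, if_neg (by omega)]
        show interp (g (n + 2)) Bv N _ = interp (g (n + 2)) Bv N _
        rw [Nat.add_comm n 1]
      · rw [if_neg hk0, if_neg hk0, trunc_lt hk,
          Mblk_real (D - (n + 1)) hw _ k (by omega), if_neg hk0,
          trunc_lt (by omega : k + 1 < D - (n + 1) + 1), hIH (k + 1) (by omega),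
          if_neg (by omega)]
        rw [show n + (k + 1) = n + 1 + k by ring]

def net (f g : ℕ → ℝ → ℝ) (r Bv : ℝ) (N D : ℕ) : NN :=
  chain (blocks f g r Bv N D) (2 * (D - 1))

lemma net_Dm (f g : ℕ → ℝ → ℝ) (r Bv : ℝ) (N D : ℕ) :
    (net f g r Bv N D).Dm = 2 * (D - 1) + 1 :=
  chain_Dm _ (blocks_Dm f g r Bv N D) _

lemma net_l0 (f g : ℕ → ℝ → ℝ) (r Bv : ℝ) (N D : ℕ) : (net f g r Bv N D).l 0 = D := by
  rw [net, chain_l0, blocks_zero]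
  rfl

lemma net_lLast (f g : ℕ → ℝ → ℝ) (r Bv : ℝ) (N D : ℕ) (hD : 1 ≤ D) :
    (net f g r Bv N D).l (2 * (D - 1) + 2) = 1 := by
  rw [net, chain_l_top _ (blocks_Dm f g r Bv N D)]
  rcases Nat.eq_or_lt_of_le hD with h1 | h2
  · rw [show 2 * (D - 1) = 0 by omega, blocks_zero]
    show D = 1
    omega
  · rw [show 2 * (D - 1) = 2 * (D - 2) + 2 by omega, blocks_even]
    show D - (D - 2 + 1) = 1
    omega

lemma net_width (f g : ℕ → ℝ → ℝ) (r Bv : ℝ) (N D : ℕ) (hD : 1 ≤ D) (hN : 2 ≤ N) :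
    ∀ k, k ≤ 2 * (D - 1) + 2 →
      (net f g r Bv N D).l k ≤ if k % 2 = 0 then 2 * D + 1 else D * (N + 1) := by
  have key : ∀ j, j ≤ 2 * (D - 1) →
      (blocks f g r Bv N D j).l 1 ≤ if (j + 1) % 2 = 0 then 2 * D + 1 else D * (N + 1) := by
    intro j hj
    rcases Nat.eq_zero_or_pos j with hj0 | hjpos
    · subst hj0
      rw [blocks_zero]
      show D * (N + 1) ≤ _
      norm_num
    · rcases Nat.even_or_odd j with ⟨i, hi⟩ | ⟨i, hi⟩
      · -- j = 2i, i ≥ 1 : G block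
        have hi1 : 1 ≤ i := by omega
        rw [show j = 2 * (i - 1) + 2 by omega, blocks_even]
        show (Gblk (g (i - 1 + 2)) Bv N (D - (i - 1 + 1))).l 1 ≤ _
        rw [Gblk, mkBlock_l1, if_neg (by omega)]
        have hD2 : 2 ≤ D := by omega
        have h1 : N + 1 + 2 * (D - (i - 1 + 1) - 1) ≤ N + 2 * D - 3 := by omega
        obtain ⟨D', rfl⟩ : ∃ D', D = D' + 2 := ⟨D - 2, by omega⟩
        obtain ⟨N', rfl⟩ : ∃ N', N = N' + 2 := ⟨N - 2, by omega⟩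
        have h2 : N' + 2 + 2 * (D' + 2) ≤ (D' + 2) * (N' + 2 + 1) + 3 := by nlinarith
        omega
      · -- j = 2i+1 : M block
        rw [show j = 2 * i + 1 by omega, blocks_odd]
        show (Mblk (D - (i + 1))).l 1 ≤ _
        rw [Mblk, mkBlock_l1, if_pos (by omega)]
        omega
  intro k hk
  rcases Nat.eq_zero_or_pos k with hk0 | hkpos
  · subst hk0
    rw [net_l0, if_pos rfl]
    omega
  · rcases Nat.lt_or_ge k (2 * (D - 1) + 2) with hlt | hge
    · have hk1 : k - 1 ≤ 2 * (D - 1) := by omega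
      have : (net f g r Bv N D).l k = (blocks f g r Bv N D (k - 1)).l 1 := by
        rw [net, show k = (k - 1) + 1 by omega]
        exact chain_l_mid _ (blocks_Dm f g r Bv N D) _ _ hk1
      rw [this, show k = (k - 1) + 1 by omega]
      exact key (k - 1) hk1
    · have hkeq : k = 2 * (D - 1) + 2 := by omega
      subst hkeq
      rw [net_lLast f g r Bv N D hD, if_pos (by omega)]
      omega

lemma net_P (f g : ℕ → ℝ → ℝ) (r Bv : ℝ) (N D : ℕ) (hD : 1 ≤ D) (hN : 2 ≤ N) :
    (net f g r Bv N D).P ≤ 2 * D * ((2 * D + 2) * (D * (N + 1) + 1)) := by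
  have hdepth : (net f g r Bv N D).depth = 2 * (D - 1) + 2 := by
    unfold NN.depth
    rw [net_Dm]
  unfold NN.P
  rw [hdepth]
  have hterm : ∀ k ∈ Finset.range (2 * (D - 1) + 2),
      (net f g r Bv N D).l (k + 1) * ((net f g r Bv N D).l k + 1)
        ≤ (2 * D + 2) * (D * (N + 1) + 1) := by
    intro k hk
    have hk' : k < 2 * (D - 1) + 2 := Finset.mem_range.1 hk
    have w1 := net_width f g r Bv N D hD hN (k + 1) (by omega)
    have w0 := net_width f g r Bv N D hD hN k (by omega)
    have hDN : 2 * D + 1 ≤ D * (N + 1) + 1 := by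
      have := Nat.mul_le_mul_left D (show 2 ≤ N + 1 by omega)
      omega
    rcases Nat.even_or_odd k with ⟨i, hi⟩ | ⟨i, hi⟩
    · rw [if_pos (by omega)] at w0
      rw [if_neg (by omega)] at w1
      calc (net f g r Bv N D).l (k + 1) * ((net f g r Bv N D).l k + 1)
          ≤ D * (N + 1) * (2 * D + 2) := Nat.mul_le_mul w1 (by omega)
        _ = (2 * D + 2) * (D * (N + 1)) := by ring
        _ ≤ (2 * D + 2) * (D * (N + 1) + 1) := Nat.mul_le_mul_left _ (Nat.le_succ _)
    · rw [if_neg (by omega)] at w0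
      rw [if_pos (by omega)] at w1
      calc (net f g r Bv N D).l (k + 1) * ((net f g r Bv N D).l k + 1)
          ≤ (2 * D + 1) * (D * (N + 1) + 1) := Nat.mul_le_mul w1 (by omega)
        _ ≤ (2 * D + 2) * (D * (N + 1) + 1) := Nat.mul_le_mul_right _ (by omega)
  calc ∑ k ∈ Finset.range (2 * (D - 1) + 2),
      (net f g r Bv N D).l (k + 1) * ((net f g r Bv N D).l k + 1)
      ≤ ∑ _k ∈ Finset.range (2 * (D - 1) + 2), (2 * D + 2) * (D * (N + 1) + 1) :=
        Finset.sum_le_sum hterm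
    _ = (2 * (D - 1) + 2) * ((2 * D + 2) * (D * (N + 1) + 1)) := by
        rw [Finset.sum_const, Finset.card_range, smul_eq_mul]
    _ ≤ 2 * D * ((2 * D + 2) * (D * (N + 1) + 1)) := by
        apply Nat.mul_le_mul_right
        omega

lemma coord_le_norm {n : ℕ} (z : EuclideanSpace ℝ (Fin n)) (c : Fin n) : |z c| ≤ ‖z‖ := by
  rw [EuclideanSpace.norm_eq]
  rw [show |z c| = Real.sqrt (|z c| ^ 2) by rw [Real.sqrt_sq_eq_abs, abs_abs]]
  apply Real.sqrt_le_sqrt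
  have := Finset.single_le_sum (f := fun i => ‖z i‖ ^ 2)
    (fun i _ => sq_nonneg _) (Finset.mem_univ c)
  calc |z c| ^ 2 = ‖z c‖ ^ 2 := by rw [Real.norm_eq_abs]
    _ ≤ ∑ i, ‖z i‖ ^ 2 := this

end Constr

set_option maxHeartbeats 2000000 in
/-- Proposition 7.3: recursive maxima of one-dimensional Lipschitz functions
can be approximated by ReLU networks without the curse of dimensionality. -/
theorem recursive_max_approximation (K r : ℝ) (hK : 1 ≤ K) (hr : 1 ≤ r)
    (f g : ℕ → ℝ → ℝ)
    (hfLip : ∀ i : ℕ, ∀ x y : ℝ, |f i x - f i y| ≤ K * |x - y|)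
    (hf0 : ∀ i : ℕ, |f i 0| ≤ K)
    (hgLip : ∀ i : ℕ, ∀ x y : ℝ, |g i x - g i y| ≤ |x - y|)
    (hg0 : ∀ i : ℕ, g i 0 = 0) :
    ∀ d : ℕ, ∀ ε : ℝ, 0 < ε → ε ≤ 1 →
      ∃ φ : NN, φ.l 0 = d + 1 ∧ φ.l φ.depth = 1 ∧
        (∀ x : EuclideanSpace ℝ (Fin (d + 1)), (∀ i, |x i| ≤ r) →
          |hrec f g d x - φ.realScalar ReLU (d + 1) x| ≤ ε) ∧
        (∀ x y : EuclideanSpace ℝ (Fin (d + 1)),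
          |φ.realScalar ReLU (d + 1) x - φ.realScalar ReLU (d + 1) y| ≤ K * ‖x - y‖) ∧
        ((φ.P : ℝ) ≤ (3 / 7) * 10 ^ 4 * K ^ 3 * r *
            ((d : ℝ) + 1) ^ ((13 : ℝ) / 2) * ε⁻¹) := by
  intro d ε hε0 hε1
  set D : ℕ := d + 1 with hDdef
  have hD1 : 1 ≤ D := by omega
  have hD1d : D - 1 = d := by omega
  have hK0 : (0:ℝ) < K := by linarith
  have hr0 : (0:ℝ) < r := by linarith
  have hKr1 : (1:ℝ) ≤ K * r := by nlinarith
  have hDR1 : (1:ℝ) ≤ (D:ℝ) := by exact_mod_cast hD1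
  have hQ1 : (1:ℝ) ≤ K * r * D / ε := by
    rw [le_div_iff₀ hε0]
    nlinarith
  set Nr : ℝ := 16 * K * r * D / ε with hNr
  have hNrpos : (0:ℝ) < Nr := by
    have h : (0:ℝ) < 16 * K * r * D := by positivity
    exact div_pos h hε0
  set N : ℕ := Nat.ceil Nr with hNdef
  have hNge : Nr ≤ (N:ℝ) := Nat.le_ceil Nr
  have hNr16 : (16:ℝ) ≤ Nr := by
    rw [hNr, le_div_iff₀ hε0]
    nlinarith
  have hN16 : (16:ℝ) ≤ (N:ℝ) := le_trans hNr16 hNge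
  have hN2 : 2 ≤ N := by exact_mod_cast le_trans (by norm_num : (2:ℝ) ≤ 16) hN16
  have hN0 : 0 < N := by omega
  have hN0R : (0:ℝ) < (N:ℝ) := by positivity
  have hNle : (N:ℝ) ≤ 17 * K * r * D / ε := by
    have h1 : (N:ℝ) < Nr + 1 := Nat.ceil_lt_add_one (le_of_lt hNrpos)
    have h2 : Nr + 1 ≤ 17 * K * r * D / ε := by
      rw [hNr]
      have : 17 * K * r * ↑D / ε = 16 * K * r * ↑D / ε + K * r * ↑D / ε := by ring
      rw [this]
      linarith
    linarith
  set Bv : ℝ := 2 * K * r + 1 with hBvdef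
  have hBv0 : (0:ℝ) < Bv := by rw [hBvdef]; nlinarith
  have hreal : ∀ x : EuclideanSpace ℝ (Fin D),
      (Constr.net f g r Bv N D).realScalar ReLU D x
        = Constr.Sf f g r Bv N d (trunc D (emb D x)) := by
    intro x
    show (Constr.net f g r Bv N D).fullReal ReLU (emb D x) 0 = _
    have hnet : Constr.net f g r Bv N D = chain (Constr.blocks f g r Bv N D) (2 * d) := by
      rw [Constr.net, hD1d]
    rw [hnet, Constr.net_real f g r Bv N D hD1 d (by omega) (emb D x) 0 (by omega), if_pos rfl]
  have hres : ∀ x : EuclideanSpace ℝ (Fin D), Constr.res d (trunc D (emb D x)) = x := by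
    intro x
    ext c
    show trunc D (emb D x) ↑c = x c
    rw [Constr.trunc_lt c.isLt]
    show emb D x ↑c = x c
    rw [emb, dif_pos c.isLt]
  refine ⟨Constr.net f g r Bv N D, ?_, ?_, ?_, ?_, ?_⟩
  · rw [Constr.net_l0]
  · show (Constr.net f g r Bv N D).l ((Constr.net f g r Bv N D).Dm + 1) = 1
    rw [Constr.net_Dm]
    exact Constr.net_lLast f g r Bv N D hD1
  · -- approximation
    intro x hx
    rw [hreal x]
    have hbox : ∀ c, c ≤ d → |trunc D (emb D x) c| ≤ r := by
      intro c hc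
      have hcD : c < D := by omega
      rw [Constr.trunc_lt hcD]
      show |emb D x c| ≤ r
      rw [emb, dif_pos hcD]
      exact hx _
    have hbound : 2 * K * (2 * r / ↑N) + (d:ℝ) * (2 * 1 * (2 * Bv / ↑N)) ≤ ε := by
      have h16 : 4 * K * r + (d:ℝ) * (8 * K * r + 4) ≤ 16 * K * r * D := by
        have hd0 : (0:ℝ) ≤ (d:ℝ) := Nat.cast_nonneg d
        have hDd : (D:ℝ) = (d:ℝ) + 1 := by rw [hDdef]; push_cast; ring
        rw [hDd]
        nlinarith
      have heq : 2 * K * (2 * r / ↑N) + (d:ℝ) * (2 * 1 * (2 * Bv / ↑N))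
          = (4 * K * r + (d:ℝ) * (8 * K * r + 4)) / ↑N := by
        rw [hBvdef]
        field_simp
        ring
      rw [heq]
      have hNε : 16 * K * r * ↑D ≤ ε * ↑N := by
        have := (div_le_iff₀ hε0).1 hNge
        linarith
      rw [div_le_iff₀ hN0R]
      calc 4 * K * r + (d:ℝ) * (8 * K * r + 4) ≤ 16 * K * r * D := h16
        _ ≤ ε * ↑N := hNε
    have hsmall : 2 * K * (2 * r / ↑N) + (d:ℝ) * (2 * 1 * (2 * Bv / ↑N)) ≤ 1 :=
      le_trans hbound hε1
    have herr := Constr.Sf_err (f := f) (g := g) (K := K) (r := r) (N := N)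
      (hK := hK) (hr := hr) (hN := hN0) (hfLip := hfLip) (hf0 := hf0)
      (hgLip := hgLip) (hg0 := hg0) (hr0 := hr0) (hBv2 := hBvdef)
      d (trunc D (emb D x)) hsmall hbox
    rw [hres x] at herr
    calc |hrec f g d x - Constr.Sf f g r Bv N d (trunc D (emb D x))|
        = |Constr.Sf f g r Bv N d (trunc D (emb D x)) - hrec f g d x| := abs_sub_comm _ _
      _ ≤ 2 * K * (2 * r / ↑N) + (d:ℝ) * (2 * 1 * (2 * Bv / ↑N)) := herr
      _ ≤ ε := hbound
  · -- Lipschitz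
    intro x y
    rw [hreal x, hreal y]
    have hcoords : ∀ c, c ≤ d →
        |trunc D (emb D x) c - trunc D (emb D y) c| ≤ ‖x - y‖ := by
      intro c hc
      have hcD : c < D := by omega
      rw [Constr.trunc_lt hcD, Constr.trunc_lt hcD]
      show |emb D x c - emb D y c| ≤ _
      rw [emb, emb, dif_pos hcD, dif_pos hcD]
      have hsub : x ⟨c, hcD⟩ - y ⟨c, hcD⟩ = (x - y) ⟨c, hcD⟩ := rfl
      rw [hsub]
      exact Constr.coord_le_norm (x - y) ⟨c, hcD⟩
    exact Constr.Sf_lip (hK := hK) (hr := hr) (hN := hN0) (hfLip := hfLip)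
      (hgLip := hgLip) (hBv := hBv0) (hr0 := hr0) d _ _ ‖x - y‖ (norm_nonneg _) hcoords
  · -- parameter count
    have hP := Constr.net_P f g r Bv N D hD1 hN2
    have hPr : ((Constr.net f g r Bv N D).P : ℝ)
        ≤ 2 * (D:ℝ) * ((2 * D + 2) * (D * (N + 1) + 1)) := by
      calc ((Constr.net f g r Bv N D).P : ℝ)
          ≤ ((2 * D * ((2 * D + 2) * (D * (N + 1) + 1)) : ℕ) : ℝ) := by exact_mod_cast hP
        _ = 2 * (D:ℝ) * ((2 * D + 2) * (D * (N + 1) + 1)) := by push_cast; ring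
    have hN2R : (2:ℝ) ≤ (N:ℝ) := by exact_mod_cast hN2
    have e1 : 2 * (D:ℝ) + 2 ≤ 4 * D := by linarith
    have e2 : (D:ℝ) * (N + 1) + 1 ≤ 2 * D * N := by nlinarith
    have hstep : 2 * (D:ℝ) * ((2 * D + 2) * (D * (N + 1) + 1)) ≤ 16 * (D:ℝ)^3 * N := by
      calc 2 * (D:ℝ) * ((2 * D + 2) * (D * (N + 1) + 1))
          ≤ 2 * (D:ℝ) * ((4 * D) * (2 * D * N)) := by
            apply mul_le_mul_of_nonneg_left _ (by positivity)
            apply mul_le_mul e1 e2 (by positivity) (by positivity)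
        _ = 16 * (D:ℝ)^3 * N := by ring
    have hstep2 : 16 * (D:ℝ)^3 * N ≤ 16 * (D:ℝ)^3 * (17 * K * r * D / ε) :=
      mul_le_mul_of_nonneg_left hNle (by positivity)
    have hstep3 : 16 * (D:ℝ)^3 * (17 * K * r * D / ε) = 272 * K * r * (D:ℝ)^4 / ε := by
      field_simp
      ring
    have hK3 : K ≤ K ^ 3 := by
      nlinarith [mul_nonneg (mul_nonneg (sub_nonneg.2 hK) (show (0:ℝ) ≤ K + 1 by linarith))
        (show (0:ℝ) ≤ K by linarith)]
    have hpow : (D:ℝ)^(4:ℕ) ≤ (D:ℝ) ^ ((13:ℝ)/2) := by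
      have h := Real.rpow_le_rpow_of_exponent_le hDR1 (show ((4:ℕ):ℝ) ≤ 13/2 by norm_num)
      rwa [Real.rpow_natCast] at h
    have hDd : ((d:ℝ) + 1) = (D:ℝ) := by rw [hDdef]; push_cast; ring
    rw [hDd]
    have hfinal : 272 * K * r * (D:ℝ)^4 / ε
        ≤ (3/7) * 10^4 * K^3 * r * (D:ℝ) ^ ((13:ℝ)/2) * ε⁻¹ := by
      rw [div_eq_mul_inv]
      have hrp : (0:ℝ) ≤ (D:ℝ) ^ ((13:ℝ)/2) := Real.rpow_nonneg (by linarith) _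
      have hεinv : (0:ℝ) ≤ ε⁻¹ := by positivity
      have hcore : 272 * K * r * (D:ℝ)^4 ≤ (3/7) * 10^4 * K^3 * r * (D:ℝ) ^ ((13:ℝ)/2) := by
        have c1 : 272 * K * r * (D:ℝ)^4 ≤ 272 * K^3 * r * (D:ℝ) ^ ((13:ℝ)/2) := by
          have m1 : K * ((D:ℝ)^4) ≤ K^3 * ((D:ℝ) ^ ((13:ℝ)/2)) := by
            apply mul_le_mul hK3 hpow (by positivity) (by nlinarith)
          nlinarith [mul_le_mul_of_nonneg_left m1 (show (0:ℝ) ≤ 272 * r by linarith)]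
        have c2 : 272 * K^3 * r * (D:ℝ) ^ ((13:ℝ)/2)
            ≤ (3/7) * 10^4 * K^3 * r * (D:ℝ) ^ ((13:ℝ)/2) := by
          have : (272:ℝ) ≤ (3/7) * 10^4 := by norm_num
          have hpos : (0:ℝ) ≤ K^3 * r * (D:ℝ) ^ ((13:ℝ)/2) := by positivity
          nlinarith
        linarith
      exact mul_le_mul_of_nonneg_right hcore hεinv
    calc ((Constr.net f g r Bv N D).P : ℝ)
        ≤ 2 * (D:ℝ) * ((2 * D + 2) * (D * (N + 1) + 1)) := hPr
      _ ≤ 16 * (D:ℝ)^3 * N := hstep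
      _ ≤ 272 * K * r * (D:ℝ)^4 / ε := by rw [← hstep3]; exact hstep2
      _ ≤ (3/7) * 10^4 * K^3 * r * (D:ℝ) ^ ((13:ℝ)/2) * ε⁻¹ := hfinal

end
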